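/- Suppose X and Y are proper geodesic hyperbolic spaces whose sequential boundaries are equipped with visual metrics. If f : X → Y is radial, then the induced map tilde f : ∂X → ∂Y (sending [(x_n)] to [(f(x_n))]) is well defined and Hölder with respect to the visual metrics. -/

import Mathlib

open Filter Metric Set

noncomputable section

namespace Gromov

variable {X : Type*} [MetricSpace X] {Y : Type*} [MetricSpace Y]

/-- The Gromov product `(x,y)_a = (d(x,a)+d(y,a)-d(x,y))/2`. -/
def gp (a x y : X) : ℝ := (dist x a + dist y a - dist x y) / 2

/-- Gromov `δ`-hyperbolicity via the `δ/4`-inequality. -/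
def IsDeltaHyperbolic (X : Type*) [MetricSpace X] (δ : ℝ) : Prop :=
  ∀ x y z w : X, gp w x y ≥ min (gp w x z) (gp w z y) - δ / 4

/-- `γ` is a geodesic starting at `x`, parametrized by arclength on `[0, M]`. -/
def IsGeodesicOn (γ : ℝ → X) (x : X) (M : ℝ) : Prop :=
  γ 0 = x ∧ ∀ s ∈ Icc (0:ℝ) M, ∀ t ∈ Icc (0:ℝ) M, dist (γ s) (γ t) = |s - t|

/-- Every two points are joined by a geodesic. -/
def IsGeodesicSpace (X : Type*) [MetricSpace X] : Prop :=
  ∀ x y : X, ∃ γ : ℝ → X, IsGeodesicOn γ x (dist x y) ∧ γ (dist x y) = y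

/-- An infinite geodesic ray emanating from `x`. -/
def IsRay (γ : ℝ → X) (x : X) : Prop :=
  γ 0 = x ∧ ∀ s ∈ Ici (0:ℝ), ∀ t ∈ Ici (0:ℝ), dist (γ s) (γ t) = |s - t|

/-- `f` is `(l, μ)`-large scale Lipschitz. -/
def IsLSL (f : X → Y) (l μ : ℝ) : Prop :=
  ∀ x y : X, dist (f x) (f y) ≤ l * dist x y + μ

/-- `f` is large scale Lipschitz. -/
def LSL (f : X → Y) : Prop := ∃ l μ : ℝ, 0 < l ∧ 0 < μ ∧ IsLSL f l μ

/-- The `(l2, μ2)`-radial lower bound condition with respect to `x₀`: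
on every finite geodesic emanating from `x₀`, `l2·d(x,y) - μ2 ≤ d(f(x),f(y))`. -/
def IsRadialWith (f : X → Y) (x₀ : X) (l2 μ2 : ℝ) : Prop :=
  ∀ M, 0 ≤ M → ∀ γ : ℝ → X, IsGeodesicOn γ x₀ M →
    ∀ s ∈ Icc (0:ℝ) M, ∀ t ∈ Icc (0:ℝ) M,
      l2 * dist (γ s) (γ t) - μ2 ≤ dist (f (γ s)) (f (γ t))

/-- `f` is a radial function with respect to `x₀`. -/
def Radial (f : X → Y) (x₀ : X) : Prop :=
  LSL f ∧ ∃ l2 μ2 : ℝ, 0 < l2 ∧ 0 < μ2 ∧ IsRadialWith f x₀ l2 μ2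

/-- `f` is visual: for some basepoint `a`, `(x_n,y_n)_a → ∞` implies
`(f(x_n),f(y_n))_{f(a)} → ∞`. -/
def VisualFn (f : X → Y) : Prop :=
  ∃ a : X, ∀ x y : ℕ → X,
    Tendsto (fun n => gp a (x n) (y n)) atTop atTop →
    Tendsto (fun n => gp (f a) (f (x n)) (f (y n))) atTop atTop

/-- `liminf_{i,j→∞} (x_i,x_j)_a = ∞`: the sequence converges to infinity. -/
def ConvSeq (a : X) (x : ℕ → X) : Prop :=
  Tendsto (fun p : ℕ × ℕ => gp a (x p.1) (x p.2)) atTop atTop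

/-- `liminf_{i,j→∞} (x_i,y_j)_a = ∞`: the two sequences are equivalent. -/
def SeqEquiv (a : X) (x y : ℕ → X) : Prop :=
  Tendsto (fun p : ℕ × ℕ => gp a (x p.1) (y p.2)) atTop atTop

def BSeq (a : X) : Type _ := {x : ℕ → X // ConvSeq a x}

/-- The sequential boundary `∂X` with basepoint `a`. -/
def Boundary (a : X) : Type _ := Quot (fun x y : BSeq a => SeqEquiv a x.1 y.1)

/-- The boundary point represented by a sequence. -/
def bpt (a : X) (x : ℕ → X) (hx : ConvSeq a x) : Boundary a :=
  Quot.mk _ ⟨x, hx⟩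

/-- `liminf_{i,j→∞} (x_i,y_j)_a` as an extended real. -/
def gpSeqs (a : X) (x y : ℕ → X) : EReal :=
  liminf (fun p : ℕ × ℕ => ((gp a (x p.1) (y p.2)) : EReal)) atTop

/-- The basic neighborhood `U(p,r)` in the sequential boundary. -/
def U (a : X) (p : Boundary a) (r : ℝ) : Set (Boundary a) :=
  {q | ∃ (x y : ℕ → X) (hx : ConvSeq a x) (hy : ConvSeq a y),
    bpt a x hx = p ∧ bpt a y hy = q ∧ (r : EReal) ≤ gpSeqs a x y}

instance (a : X) : TopologicalSpace (Boundary a) :=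
  TopologicalSpace.generateFrom {s | ∃ p r, 0 < r ∧ s = U a p r}

/-- The union `X ∪ ∂X`. -/
def Comp (a : X) : Type _ := X ⊕ Boundary a

def Comp.inl {a : X} (x : X) : Comp a := Sum.inl x
def Comp.inr {a : X} (p : Boundary a) : Comp a := Sum.inr p

/-- The extension of `U(p,r)` to `X ∪ ∂X`. -/
def UFull (a : X) (p : Boundary a) (r : ℝ) : Set (Comp a) :=
  {z : X ⊕ Boundary a | Sum.elim
    (fun x : X => ∃ (s : ℕ → X) (hs : ConvSeq a s), bpt a s hs = p ∧
      (r : EReal) ≤ liminf (fun i : ℕ => ((gp a (s i) x) : EReal)) atTop)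
    (fun q : Boundary a => q ∈ U a p r) z}

instance (a : X) : TopologicalSpace (Comp a) :=
  TopologicalSpace.generateFrom
    ({s | ∃ u : Set X, IsOpen u ∧ s = Comp.inl '' u} ∪
     {s | ∃ p r, 0 < r ∧ s = UFull a p r})

/-- The Gromov product of two boundary points:
`(p,q)_a = inf liminf_{i→∞} (x_i,y_i)_a` over representatives. -/
def gpBoundary (a : X) (p q : Boundary a) : EReal :=
  sInf {e : EReal | ∃ (x y : ℕ → X) (hx : ConvSeq a x) (hy : ConvSeq a y),
    bpt a x hx = p ∧ bpt a y hy = q ∧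
    e = liminf (fun i : ℕ => ((gp a (x i) (y i)) : EReal)) atTop}

/-- `K^{-e}` for an extended real exponent `e` (with `K^{-∞} = 0`). -/
def negPow (K : ℝ) (e : EReal) : ℝ :=
  if e = ⊤ then 0 else if e = ⊥ then 0 else Real.rpow K (-(e.toReal))

/-- `d` is a visual metric on `∂X` with parameters `K, C > 1`. -/
def IsVisualMetric (a : X) (d : Boundary a → Boundary a → ℝ) (K C : ℝ) : Prop :=
  1 < K ∧ 1 < C ∧ ∀ p q : Boundary a,
    negPow K (gpBoundary a p q) / C ≤ d p q ∧ d p q ≤ C * negPow K (gpBoundary a p q)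

/-- A map between sets with distinguished distance functions is Hölder. -/
def IsHolder {A B : Type*} (dA : A → A → ℝ) (dB : B → B → ℝ) (g : A → B) : Prop :=
  ∃ L α : ℝ, 0 < L ∧ 0 < α ∧ ∀ p q : A, dB (g p) (g q) ≤ L * Real.rpow (dA p q) α

/-- `(ξ₁,ξ₂)_a = liminf_{t→∞} (ξ₁(t),ξ₂(t))_a` for rays. -/
def gpRays (a : X) (ξ₁ ξ₂ : ℝ → X) : EReal :=
  liminf (fun t : ℝ => ((gp a (ξ₁ t) (ξ₂ t)) : EReal)) atTop

/-- The geodesic ray `ξ` represents the boundary point `p`. -/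
def RayRepresents (a : X) (ξ : ℝ → X) (p : Boundary a) : Prop :=
  ∃ h : ConvSeq a (fun n : ℕ => ξ n), bpt a (fun n : ℕ => ξ n) h = p

/-- `(x,ξ)_a = liminf_{n→∞} (x,ξ(n))_a`. -/
def gpPointRay (a x : X) (ξ : ℝ → X) : ℝ :=
  liminf (fun n : ℕ => gp a x (ξ n)) atTop

/-- `X` is a visual hyperbolic space with basepoint `a` and constant `D`. -/
def IsVisualSpace (a : X) (D : ℝ) : Prop :=
  ∀ x : X, ∃ ξ : ℝ → X, IsRay ξ a ∧ gpPointRay a x ξ > dist x a - D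

/-- A maximal finite geodesic from `a`: it admits no proper geodesic extension. -/
def MaximalGeodesic (ζ : ℝ → X) (a : X) (M : ℝ) : Prop :=
  IsGeodesicOn ζ a M ∧
    ¬ ∃ (M' : ℝ) (ζ' : ℝ → X), M < M' ∧ IsGeodesicOn ζ' a M' ∧
      ∀ t ∈ Icc (0:ℝ) M, ζ' t = ζ t

/-- `f : X → Y` is a radial extension with parameter `A` of `g : ∂X → ∂Y`
(`D` being the visuality constant of `X`). -/
def IsRadialExtension (a : X) (b : Y) (g : Boundary a → Boundary b)
    (A D : ℝ) (f : X → Y) : Prop :=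
  f a = b ∧
  ∀ x : X, x ≠ a →
    ((∃ (ξ : ℝ → X) (t : ℝ), IsRay ξ a ∧ 0 ≤ t ∧ ξ t = x) →
      ∃ (ξ : ℝ → X) (t : ℝ) (η : ℝ → Y), IsRay ξ a ∧ 0 ≤ t ∧ ξ t = x ∧ IsRay η b ∧
        (∃ p : Boundary a, RayRepresents a ξ p ∧ RayRepresents b η (g p)) ∧
        f x = η (A * t)) ∧
    ((¬ ∃ (ξ : ℝ → X) (t : ℝ), IsRay ξ a ∧ 0 ≤ t ∧ ξ t = x) →
      ∃ (M t : ℝ) (ζ ξ : ℝ → X) (η : ℝ → Y),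
        MaximalGeodesic ζ a M ∧ t ∈ Icc (0:ℝ) M ∧ ζ t = x ∧
        IsRay ξ a ∧ gpPointRay a (ζ M) ξ > dist (ζ M) a - D ∧ IsRay η b ∧
        (∃ p : Boundary a, RayRepresents a ξ p ∧ RayRepresents b η (g p)) ∧
        f x = η (A * t))

/-- `f` is coarsely surjective. -/
def CoarselySurjective (f : X → Y) : Prop :=
  ∃ S : ℝ, 0 < S ∧ ∀ y : Y, ∃ x : X, dist y (f x) ≤ S

/-- `f` is bornologous (coarse). -/
def Bornologous (f : X → Y) : Prop :=
  ∀ R : ℝ, 0 < R → ∃ S : ℝ, 0 < S ∧ ∀ x x' : X, dist x x' ≤ R → dist (f x) (f x') ≤ S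

/-- `f` is a coarse embedding. -/
def CoarseEmbedding (f : X → Y) : Prop :=
  Bornologous f ∧
    ∀ R : ℝ, 0 < R → ∃ S : ℝ, 0 < S ∧ ∀ x x' : X, dist (f x) (f x') ≤ R → dist x x' ≤ S

/-- `f` is coarsely `n`-to-1. -/
def CoarselyNto1 (f : X → Y) (n : ℕ) : Prop :=
  ∀ R : ℝ, 0 < R → ∃ S : ℝ, 0 < S ∧ ∀ A : Set Y, EMetric.diam A < ENNReal.ofReal R →
    ∃ B : Fin n → Set X, (f ⁻¹' A = ⋃ i, B i) ∧
      ∀ i, EMetric.diam (B i) < ENNReal.ofReal S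

/-- `g : ∂X → ∂Y` is the boundary map induced by `f`, i.e. `g [(x_n)] = [(f(x_n))]`. -/
def InducedBoundaryMap (a : X) (f : X → Y) (g : Boundary a → Boundary (f a)) : Prop :=
  ∀ (x : ℕ → X) (hx : ConvSeq a x) (hfx : ConvSeq (f a) (f ∘ x)),
    g (bpt a x hx) = bpt (f a) (f ∘ x) hfx

/-- `g` is (at most) `n`-to-1. -/
def NTo1 {A B : Type*} (g : A → B) (n : ℕ) : Prop :=
  ∀ b : B, ∃ s : Finset A, s.card ≤ n ∧ ∀ a : A, g a = b → a ∈ s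

/-- Covering dimension at most `n`: every open cover admits an open refinement
of multiplicity at most `n+1`. -/
def CovDimLE (Z : Type*) [TopologicalSpace Z] (n : ℕ) : Prop :=
  ∀ 𝒰 : Set (Set Z), (∀ u ∈ 𝒰, IsOpen u) → ⋃₀ 𝒰 = univ →
    ∃ 𝒱 : Set (Set Z), (∀ v ∈ 𝒱, IsOpen v) ∧ ⋃₀ 𝒱 = univ ∧
      (∀ v ∈ 𝒱, ∃ u ∈ 𝒰, v ⊆ u) ∧
      ∀ z : Z, {v ∈ 𝒱 | z ∈ v}.Finite ∧ {v ∈ 𝒱 | z ∈ v}.ncard ≤ n + 1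

/-- `c_{f,n}(r)`: the supremum of numbers `B` such that there exist `n+1` points
with mutual Gromov products `< r` whose images have mutual Gromov products `≥ B`. -/
def cfn (a : X) (b : Y) (f : X → Y) (n : ℕ) (r : ℝ) : EReal :=
  sSup {e : EReal | ∃ (B : ℝ) (x : Fin (n + 1) → X), e = (B : EReal) ∧
    (∀ i j, i ≠ j → gp a (x i) (x j) < r) ∧
    (∀ i j, i ≠ j → B ≤ gp b (f (x i)) (f (x j)))}

section Aux

variable {X : Type*} [MetricSpace X] {Y : Type*} [MetricSpace Y]

lemma gp_nonneg (a x y : X) : 0 ≤ gp a x y := by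
  have h := dist_triangle x a y
  rw [dist_comm a y] at h
  unfold gp; linarith

lemma gp_comm (a x y : X) : gp a x y = gp a y x := by
  unfold gp; rw [dist_comm x y]; ring

lemma gp_le_left (a x y : X) : gp a x y ≤ dist x a := by
  have h := dist_triangle y x a
  rw [dist_comm y x] at h
  unfold gp; linarith

lemma gp_self (a x : X) : gp a x x = dist x a := by
  unfold gp; simp

lemma hyp' {δ : ℝ} (hX : IsDeltaHyperbolic X δ) (a x y z : X) :
    min (gp a x z) (gp a z y) - max δ 0 / 4 ≤ gp a x y := by
  have h1 := hX x y z a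
  have h2 : δ ≤ max δ 0 := le_max_left _ _
  linarith

lemma seqEquiv_symm {a : X} {x y : ℕ → X} (h : SeqEquiv a x y) : SeqEquiv a y x := by
  rw [SeqEquiv, Filter.tendsto_atTop] at h ⊢
  intro b
  obtain ⟨N, hN⟩ := Filter.eventually_atTop.1 (h b)
  refine Filter.eventually_atTop.2 ⟨(N.2, N.1), fun p hp => ?_⟩
  have := hN (p.2, p.1) ⟨hp.2, hp.1⟩
  simpa [gp_comm] using this

lemma seqEquiv_trans {δ : ℝ} (hX : IsDeltaHyperbolic X δ) {a : X} {x y z : ℕ → X}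
    (hxy : SeqEquiv a x y) (hyz : SeqEquiv a y z) : SeqEquiv a x z := by
  rw [SeqEquiv, Filter.tendsto_atTop] at hxy hyz ⊢
  intro b
  obtain ⟨N₁, h₁⟩ := Filter.eventually_atTop.1 (hxy (b + max δ 0 / 4))
  obtain ⟨N₂, h₂⟩ := Filter.eventually_atTop.1 (hyz (b + max δ 0 / 4))
  refine Filter.eventually_atTop.2 ⟨(N₁.1, N₂.2), fun p hp => ?_⟩
  have e₁ : b + max δ 0 / 4 ≤ gp a (x p.1) (y (max N₁.2 N₂.1)) :=
    h₁ (p.1, max N₁.2 N₂.1) ⟨hp.1, le_max_left _ _⟩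
  have e₂ : b + max δ 0 / 4 ≤ gp a (y (max N₁.2 N₂.1)) (z p.2) :=
    h₂ (max N₁.2 N₂.1, p.2) ⟨le_max_right _ _, hp.2⟩
  have hm := le_min e₁ e₂
  have := hyp' hX a (x p.1) (z p.2) (y (max N₁.2 N₂.1))
  linarith

lemma bseq_equivalence {δ : ℝ} (hX : IsDeltaHyperbolic X δ) (a : X) :
    Equivalence (fun u v : BSeq a => SeqEquiv a u.1 v.1) :=
  ⟨fun u => u.2, seqEquiv_symm, seqEquiv_trans hX⟩

lemma bpt_eq_iff {δ : ℝ} (hX : IsDeltaHyperbolic X δ) {a : X} {x y : ℕ → X}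
    (hx : ConvSeq a x) (hy : ConvSeq a y) :
    bpt a x hx = bpt a y hy ↔ SeqEquiv a x y :=
  Quot.eq.trans ((bseq_equivalence hX a).eqvGen_iff)

lemma tendsto_diag : Filter.Tendsto (fun i : ℕ => (i, i)) Filter.atTop (Filter.atTop : Filter (ℕ × ℕ)) :=
  Filter.tendsto_atTop.2 fun b => Filter.eventually_atTop.2
    ⟨max b.1 b.2, fun i hi => ⟨le_trans (le_max_left _ _) hi, le_trans (le_max_right _ _) hi⟩⟩

lemma seqEquiv_of_diag {δ : ℝ} (hX : IsDeltaHyperbolic X δ) {a : X} {x y : ℕ → X}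
    (hx : ConvSeq a x) (hy : ConvSeq a y)
    (hd : Filter.Tendsto (fun i => gp a (x i) (y i)) Filter.atTop Filter.atTop) :
    SeqEquiv a x y := by
  rw [ConvSeq, Filter.tendsto_atTop] at hx hy
  rw [Filter.tendsto_atTop] at hd
  rw [SeqEquiv, Filter.tendsto_atTop]
  intro b
  have hδ : (0:ℝ) ≤ max δ 0 := le_max_right _ _
  obtain ⟨c, hc⟩ : ∃ c : ℝ, c = b + max δ 0 / 4 + max δ 0 / 4 := ⟨_, rfl⟩
  obtain ⟨N₁, h₁⟩ := Filter.eventually_atTop.1 (hx c)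
  obtain ⟨N₂, h₂⟩ := Filter.eventually_atTop.1 (hy c)
  obtain ⟨N₃, h₃⟩ := Filter.eventually_atTop.1 (hd c)
  set K := max (max N₁.1 N₁.2) (max (max N₂.1 N₂.2) N₃) with hK
  refine Filter.eventually_atTop.2 ⟨(K, K), fun p hp => ?_⟩
  have hp1 : K ≤ p.1 := hp.1
  have hp2 : K ≤ p.2 := hp.2
  have e₁ : c ≤ gp a (x p.1) (x K) := h₁ (p.1, K) ⟨by omega, by omega⟩
  have e₂ : c ≤ gp a (x K) (y K) := h₃ K (by omega)
  have e₃ : c ≤ gp a (y K) (y p.2) :=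
    h₂ (K, p.2) ⟨by omega, by omega⟩
  have t₁ := hyp' hX a (x K) (y p.2) (y K)
  have t₂ := hyp' hX a (x p.1) (y p.2) (x K)
  have m1 : c - max δ 0 / 4 ≤ gp a (x K) (y p.2) := by
    have := le_min e₂ e₃; linarith
  have m2 : c - max δ 0 / 4 ≤ min (gp a (x p.1) (x K)) (gp a (x K) (y p.2)) :=
    le_min (by linarith) m1
  linarith

end Aux
section Aux2

variable {X : Type*} [MetricSpace X] {Y : Type*} [MetricSpace Y]

lemma chain_gp {δ : ℝ} (hY : IsDeltaHyperbolic Y δ) (b : Y) {ε : ℝ}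
    (hδε : max δ 0 / 4 ≤ ε) :
    ∀ (n : ℕ) (w : ℕ → Y) (B : ℝ), 1 ≤ n →
      (∀ i < n, B + i * ε ≤ gp b (w i) (w (i + 1))) → B - ε ≤ gp b (w 0) (w n) := by
  have hε : 0 ≤ ε := le_trans (div_nonneg (le_max_right δ 0) (by norm_num)) hδε
  intro n
  induction n with
  | zero => intro w B h; omega
  | succ m IH =>
    intro w B _ h
    rcases Nat.eq_zero_or_pos m with hm | hm
    · subst hm
      have := h 0 (by norm_num)
      push_cast at this
      linarith
    · have hstep : ∀ i < m, (B + ε) + i * ε ≤ gp b (w (i + 1)) (w (i + 1 + 1)) := by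
        intro i hi
        have := h (i + 1) (by omega)
        push_cast at this ⊢
        linarith
      have h2 : B ≤ gp b (w 1) (w (m + 1)) := by
        have := IH (fun i => w (i + 1)) (B + ε) hm hstep
        simpa using this
      have h1 : B ≤ gp b (w 0) (w 1) := by
        have := h 0 (by omega)
        push_cast at this
        linarith
      have hh := hyp' hY b (w 0) (w (m + 1)) (w 1)
      have := le_min h1 h2
      linarith

set_option maxHeartbeats 1000000 in
lemma radial_geodesic_gp {δ l1 m1 l2 m2 : ℝ} (hY : IsDeltaHyperbolic Y δ)
    (f : X → Y) (a : X) (hl1 : 0 < l1) (hm1 : 0 < m1) (hl2 : 0 < l2) (hm2 : 0 < m2)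
    (h1 : IsLSL f l1 m1) (h2 : IsRadialWith f a l2 m2) :
    ∃ C : ℝ, 0 ≤ C ∧ ∀ M : ℝ, 0 ≤ M → ∀ γ : ℝ → X, IsGeodesicOn γ a M →
      ∀ t ∈ Icc (0:ℝ) M, l2 / 2 * t - C ≤ gp (f a) (f (γ t)) (f (γ M)) := by
  obtain ⟨ε, hε⟩ : ∃ c : ℝ, c = max δ 0 / 4 := ⟨_, rfl⟩
  have hε0 : 0 ≤ ε := hε ▸ div_nonneg (le_max_right δ 0) (by norm_num)
  obtain ⟨ρ, hρ⟩ : ∃ c : ℝ, c = l2 / l1 := ⟨_, rfl⟩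
  have hρ0 : 0 < ρ := hρ ▸ div_pos hl2 hl1
  obtain ⟨t0, ht0⟩ : ∃ c : ℝ, c = max 1 (2 * ε * l1 / (l2 * l2)) := ⟨_, rfl⟩
  have ht01 : (1:ℝ) ≤ t0 := ht0 ▸ le_max_left _ _
  have ht00 : (0:ℝ) < t0 := lt_of_lt_of_le one_pos ht01
  have htkey : 2 * ε * l1 ≤ t0 * (l2 * l2) := by
    rw [ht0, ← div_le_iff₀ (by positivity)]
    exact le_max_right _ _
  have hC0 : (0:ℝ) ≤ l2 * t0 / 2 + m2 + m1 / 2 + ε := by positivity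
  refine ⟨l2 * t0 / 2 + m2 + m1 / 2 + ε, hC0, ?_⟩
  intro M hM γ hγ t ht
  have hdb : ∀ s ∈ Icc (0:ℝ) M, l2 * s - m2 ≤ dist (f (γ s)) (f a) := by
    intro s hs
    have h0 := h2 M hM γ hγ 0 ⟨le_rfl, hM⟩ s hs
    rw [hγ.2 0 ⟨le_rfl, hM⟩ s hs, hγ.1, zero_sub, abs_neg, abs_of_nonneg hs.1,
      dist_comm] at h0
    exact h0
  rcases le_or_gt t t0 with hcase | hcase
  · have hg := gp_nonneg (f a) (f (γ t)) (f (γ M))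
    have : l2 * t ≤ l2 * t0 := mul_le_mul_of_nonneg_left hcase hl2.le
    linarith
  · have htpos : 0 < t := lt_trans ht00 hcase
    have h1ρ : (1:ℝ) < 1 + ρ := by linarith
    obtain ⟨n0, hn0⟩ := pow_unbounded_of_one_lt (M / t) h1ρ
    have hex : ∃ n : ℕ, M ≤ t * (1 + ρ) ^ n := by
      refine ⟨n0, le_of_lt ?_⟩
      rw [div_lt_iff₀ htpos] at hn0
      linarith
    have hNle : M ≤ t * (1 + ρ) ^ (Nat.find hex) := Nat.find_spec hex
    obtain ⟨N, hNdef⟩ : ∃ n : ℕ, n = Nat.find hex := ⟨_, rfl⟩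
    rw [← hNdef] at hNle
    have hmin : ∀ m : ℕ, m < N → t * (1 + ρ) ^ m < M := by
      intro m hm
      exact not_le.1 (Nat.find_min hex (by omega))
    rcases Nat.eq_zero_or_pos N with hN0 | hN1
    · have hMt : M ≤ t := by rw [hN0] at hNle; simpa using hNle
      have htM : t = M := le_antisymm ht.2 hMt
      subst htM
      have hd := hdb t ⟨hM, le_rfl⟩
      rw [gp_self]
      nlinarith [mul_nonneg hl2.le hM, mul_nonneg hl2.le ht00.le]
    · obtain ⟨T, hT⟩ : ∃ T : ℕ → ℝ, T = fun i => min (t * (1 + ρ) ^ i) M := ⟨_, rfl⟩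
      have hTmem : ∀ i, T i ∈ Icc (0:ℝ) M := by
        intro i
        rw [hT]
        exact ⟨le_min (by positivity) hM, min_le_right _ _⟩
      have hT0 : T 0 = t := by
        rw [hT]
        simp only [pow_zero, mul_one]
        exact min_eq_left ht.2
      have hTN : T N = M := by rw [hT]; exact min_eq_right hNle
      have hTmono : ∀ i, T i ≤ T (i + 1) := by
        intro i
        rw [hT]
        exact min_le_min (mul_le_mul_of_nonneg_left
          (pow_le_pow_right₀ h1ρ.le (Nat.le_succ i)) htpos.le) le_rfl
      have hTi_eq : ∀ i, i < N → T i = t * (1 + ρ) ^ i := by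
        intro i hi
        rw [hT]
        exact min_eq_left (hmin i hi).le
      have hstep : ∀ i, i < N → T (i + 1) - T i ≤ ρ * T i := by
        intro i hi
        have e1 : T (i + 1) ≤ t * (1 + ρ) ^ (i + 1) := by rw [hT]; exact min_le_left _ _
        have e2 : t * (1 + ρ) ^ (i + 1) = (1 + ρ) * (t * (1 + ρ) ^ i) := by ring
        rw [hTi_eq i hi]
        nlinarith [pow_nonneg (by linarith : (0:ℝ) ≤ 1 + ρ) i]
      have hlow : ∀ i, i < N → t * (1 + (i:ℝ) * ρ) ≤ T (i + 1) := by
        intro i hi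
        have hbern : 1 + (i:ℝ) * ρ ≤ (1 + ρ) ^ i := one_add_mul_le_pow (by linarith) i
        have hb2 : t * (1 + (i:ℝ) * ρ) ≤ t * (1 + ρ) ^ i :=
          mul_le_mul_of_nonneg_left hbern htpos.le
        rcases lt_or_ge (i + 1) N with hc | hc
        · rw [hTi_eq (i + 1) hc]
          exact le_trans hb2 (mul_le_mul_of_nonneg_left
            (pow_le_pow_right₀ h1ρ.le (Nat.le_succ i)) htpos.le)
        · have hiN : i + 1 = N := by omega
          rw [hiN, hTN]
          exact le_trans hb2 (hmin i hi).le
      have hkey : 2 * ε * l1 ≤ t * (l2 * l2) := by nlinarith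
      have hkey2 : ε ≤ l2 * t * ρ / 2 := by
        have heq : l2 * t * (l2 / l1) / 2 = t * (l2 * l2) / (2 * l1) := by
          field_simp
        rw [hρ, heq, le_div_iff₀ (by positivity)]
        linarith
      have hcons : ∀ i, i < N →
          (l2 / 2 * t - (m2 + m1 / 2)) + (i:ℝ) * ε ≤ gp (f a) (f (γ (T i))) (f (γ (T (i + 1)))) := by
        intro i hi
        have d1 := hdb (T i) (hTmem i)
        have d2 := hdb (T (i + 1)) (hTmem (i + 1))
        have dd : dist (f (γ (T i))) (f (γ (T (i + 1)))) ≤ l1 * (T (i + 1) - T i) + m1 := by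
          have hc := h1 (γ (T i)) (γ (T (i + 1)))
          rw [hγ.2 _ (hTmem i) _ (hTmem (i + 1)), abs_sub_comm,
            abs_of_nonneg (sub_nonneg.2 (hTmono i))] at hc
          exact hc
        have dd2 : l1 * (T (i + 1) - T i) ≤ l2 * T i := by
          have hs := hstep i hi
          have h' := mul_le_mul_of_nonneg_left hs hl1.le
          have he : l1 * (ρ * T i) = l2 * T i := by
            rw [hρ]
            field_simp
          linarith
        have hiε : (i:ℝ) * ε ≤ (i:ℝ) * (l2 * t * ρ / 2) :=
          mul_le_mul_of_nonneg_left hkey2 (Nat.cast_nonneg i)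
        have hgp : gp (f a) (f (γ (T i))) (f (γ (T (i + 1)))) =
            (dist (f (γ (T i))) (f a) + dist (f (γ (T (i + 1)))) (f a)
              - dist (f (γ (T i))) (f (γ (T (i + 1))))) / 2 := rfl
        rw [hgp]
        nlinarith [mul_le_mul_of_nonneg_left (hlow i hi) hl2.le]
      have hchain : l2 / 2 * t - (m2 + m1 / 2) - ε ≤ gp (f a) (f (γ (T 0))) (f (γ (T N))) :=
        chain_gp hY (f a) (le_of_eq hε.symm) N (fun i => f (γ (T i)))
          (l2 / 2 * t - (m2 + m1 / 2)) hN1 hcons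
      rw [hT0, hTN] at hchain
      nlinarith [mul_nonneg hl2.le ht00.le]

end Aux2
section Aux3

variable {X : Type*} [MetricSpace X] {Y : Type*} [MetricSpace Y]

lemma gp_le_right (a x y : X) : gp a x y ≤ dist y a := by
  rw [gp_comm]; exact gp_le_left a y x

lemma midpoints_close {δ : ℝ} (hX : IsDeltaHyperbolic X δ) (a x y : X)
    {γx γy : ℝ → X} (hgx : IsGeodesicOn γx a (dist a x)) (hx : γx (dist a x) = x)
    (hgy : IsGeodesicOn γy a (dist a y)) (hy : γy (dist a y) = y) :
    dist (γx (gp a x y)) (γy (gp a x y)) ≤ max δ 0 := by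
  obtain ⟨t, htdef⟩ : ∃ c : ℝ, c = gp a x y := ⟨_, rfl⟩
  rw [← htdef]
  have ht0 : 0 ≤ t := htdef ▸ gp_nonneg a x y
  have htx : t ≤ dist a x := htdef ▸ (dist_comm a x ▸ gp_le_left a x y)
  have hty : t ≤ dist a y := htdef ▸ (dist_comm a y ▸ gp_le_right a x y)
  have hdx : dist (γx t) a = t := by
    rw [← hgx.1, hgx.2 t ⟨ht0, htx⟩ 0 ⟨le_rfl, dist_nonneg⟩, sub_zero, abs_of_nonneg ht0]
  have hdy : dist (γy t) a = t := by
    rw [← hgy.1, hgy.2 t ⟨ht0, hty⟩ 0 ⟨le_rfl, dist_nonneg⟩, sub_zero, abs_of_nonneg ht0]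
  have hux : gp a (γx t) x = t := by
    have d2 : dist (γx t) x = dist a x - t := by
      conv_lhs => rw [← hx]
      rw [hgx.2 t ⟨ht0, htx⟩ (dist a x) ⟨dist_nonneg, le_rfl⟩, abs_of_nonpos (by linarith),
        neg_sub]
    have d3 : dist x a = dist a x := dist_comm x a
    unfold gp
    rw [hdx, d3, d2]
    ring
  have huy : gp a (γy t) y = t := by
    have d2 : dist (γy t) y = dist a y - t := by
      conv_lhs => rw [← hy]
      rw [hgy.2 t ⟨ht0, hty⟩ (dist a y) ⟨dist_nonneg, le_rfl⟩, abs_of_nonpos (by linarith),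
        neg_sub]
    have d3 : dist y a = dist a y := dist_comm y a
    unfold gp
    rw [hdy, d3, d2]
    ring
  have hδ0 : (0:ℝ) ≤ max δ 0 := le_max_right _ _
  have s1 := hyp' hX a (γx t) (γy t) x
  have s2 := hyp' hX a x (γy t) y
  have hyv : gp a y (γy t) = t := by rw [gp_comm]; exact huy
  have hxy : gp a x y = t := htdef.symm
  have m2 : t - max δ 0 / 4 ≤ gp a x (γy t) := by
    have := le_min (le_of_eq hxy.symm) (le_of_eq hyv.symm)
    linarith
  have m1 : t - max δ 0 / 4 ≤ min (gp a (γx t) x) (gp a x (γy t)) :=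
    le_min (by linarith [le_of_eq hux.symm]) m2
  have huv : t - max δ 0 / 2 ≤ gp a (γx t) (γy t) := by linarith
  have : gp a (γx t) (γy t) = (t + t - dist (γx t) (γy t)) / 2 := by
    unfold gp
    rw [hdx, hdy]
  linarith [this ▸ huv]

lemma gp_image_lower {δ : ℝ} (hX : IsDeltaHyperbolic X δ) (hY : IsDeltaHyperbolic Y δ)
    (hgX : IsGeodesicSpace X) (f : X → Y) (a : X) (hrad : Radial f a) :
    ∃ lam C : ℝ, 0 < lam ∧ 0 ≤ C ∧ ∀ x y : X, lam * gp a x y - C ≤ gp (f a) (f x) (f y) := by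
  obtain ⟨⟨l1, m1, hl1, hm1, h1⟩, l2, m2, hl2, hm2, h2⟩ := hrad
  obtain ⟨C₀, hC₀, hA⟩ := radial_geodesic_gp hY f a hl1 hm1 hl2 hm2 h1 h2
  have hδ0 : (0:ℝ) ≤ max δ 0 := le_max_right _ _
  refine ⟨l2 / 2, C₀ + (m2 + (l1 * max δ 0 + m1) / 2) + max δ 0 / 2, by positivity, ?_, ?_⟩
  · have : 0 ≤ l1 * max δ 0 := mul_nonneg hl1.le hδ0
    linarith
  intro x y
  have hlδ0 : 0 ≤ l1 * max δ 0 := mul_nonneg hl1.le (le_max_right _ _)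
  obtain ⟨t, htdef⟩ : ∃ c : ℝ, c = gp a x y := ⟨_, rfl⟩
  rw [← htdef]
  have ht0 : 0 ≤ t := htdef ▸ gp_nonneg a x y
  have htx : t ≤ dist a x := htdef ▸ (dist_comm a x ▸ gp_le_left a x y)
  have hty : t ≤ dist a y := htdef ▸ (dist_comm a y ▸ gp_le_right a x y)
  obtain ⟨γx, hγx, hγxe⟩ := hgX a x
  obtain ⟨γy, hγy, hγye⟩ := hgX a y
  have huv : dist (γx t) (γy t) ≤ max δ 0 := by
    rw [htdef]
    exact midpoints_close hX a x y hγx hγxe hγy hγye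
  have hdb : ∀ (γ : ℝ → X) (M : ℝ), IsGeodesicOn γ a M → 0 ≤ M → ∀ s ∈ Icc (0:ℝ) M,
      l2 * s - m2 ≤ dist (f (γ s)) (f a) := by
    intro γ M hγ hM s hs
    have h0 := h2 M hM γ hγ 0 ⟨le_rfl, hM⟩ s hs
    rw [hγ.2 0 ⟨le_rfl, hM⟩ s hs, hγ.1, zero_sub, abs_neg, abs_of_nonneg hs.1,
      dist_comm] at h0
    exact h0
  have e1 : l2 / 2 * t - C₀ ≤ gp (f a) (f (γx t)) (f x) := by
    have := hA (dist a x) dist_nonneg γx hγx t ⟨ht0, htx⟩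
    rwa [hγxe] at this
  have e2 : l2 / 2 * t - C₀ ≤ gp (f a) (f (γy t)) (f y) := by
    have := hA (dist a y) dist_nonneg γy hγy t ⟨ht0, hty⟩
    rwa [hγye] at this
  have e3 : l2 * t - (m2 + (l1 * max δ 0 + m1) / 2) ≤ gp (f a) (f (γx t)) (f (γy t)) := by
    have d1 := hdb γx (dist a x) hγx dist_nonneg t ⟨ht0, htx⟩
    have d2 := hdb γy (dist a y) hγy dist_nonneg t ⟨ht0, hty⟩
    have d3 : dist (f (γx t)) (f (γy t)) ≤ l1 * max δ 0 + m1 := by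
      have := h1 (γx t) (γy t)
      have := mul_le_mul_of_nonneg_left huv hl1.le
      linarith
    have hgp : gp (f a) (f (γx t)) (f (γy t)) =
        (dist (f (γx t)) (f a) + dist (f (γy t)) (f a) - dist (f (γx t)) (f (γy t))) / 2 := rfl
    rw [hgp]
    linarith
  have s1 := hyp' hY (f a) (f x) (f y) (f (γx t))
  have s2 := hyp' hY (f a) (f (γx t)) (f y) (f (γy t))
  have e1' : l2 / 2 * t - C₀ ≤ gp (f a) (f x) (f (γx t)) := by
    rw [gp_comm]; exact e1
  have mm2 : l2 / 2 * t - (C₀ + (m2 + (l1 * max δ 0 + m1) / 2)) ≤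
      min (gp (f a) (f (γx t)) (f (γy t))) (gp (f a) (f (γy t)) (f y)) := by
    refine le_min ?_ ?_
    · nlinarith [mul_nonneg hl2.le ht0]
    · linarith [e2]
  have mm1 : l2 / 2 * t - (C₀ + (m2 + (l1 * max δ 0 + m1) / 2)) - max δ 0 / 4 ≤
      min (gp (f a) (f x) (f (γx t))) (gp (f a) (f (γx t)) (f y)) := by
    refine le_min (by linarith) (by linarith)
  linarith

lemma conv_map {lam C : ℝ} (hlam : 0 < lam) {b : Y} {f : X → Y} {a : X}
    (hst : ∀ x y : X, lam * gp a x y - C ≤ gp b (f x) (f y)) :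
    (∀ x : ℕ → X, ConvSeq a x → ConvSeq b (f ∘ x)) ∧
    (∀ x y : ℕ → X, SeqEquiv a x y → SeqEquiv b (f ∘ x) (f ∘ y)) := by
  constructor
  · intro x hx
    have h' : Filter.Tendsto (fun p : ℕ × ℕ => lam * gp a (x p.1) (x p.2) - C)
        Filter.atTop Filter.atTop := by
      simpa [sub_eq_add_neg] using
        Filter.tendsto_atTop_add_const_right Filter.atTop (-C)
          (Filter.Tendsto.const_mul_atTop hlam hx)
    exact Filter.tendsto_atTop_mono (fun p => hst (x p.1) (x p.2)) h'
  · intro x y hxy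
    have h' : Filter.Tendsto (fun p : ℕ × ℕ => lam * gp a (x p.1) (y p.2) - C)
        Filter.atTop Filter.atTop := by
      simpa [sub_eq_add_neg] using
        Filter.tendsto_atTop_add_const_right Filter.atTop (-C)
          (Filter.Tendsto.const_mul_atTop hlam hxy)
    exact Filter.tendsto_atTop_mono (fun p => hst (x p.1) (y p.2)) h'

end Aux3
section Aux4

variable {X : Type*} [MetricSpace X] {Y : Type*} [MetricSpace Y]

lemma ereal_eq_top_of_forall_le {e : EReal} (h : ∀ r : ℝ, (r : EReal) ≤ e) : e = ⊤ := by
  induction e using EReal.rec with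
  | bot => exact absurd (h 0) (by simp)
  | coe r => exact absurd (EReal.coe_le_coe_iff.1 (h (r + 1))) (by linarith)
  | top => rfl

lemma liminf_coe_top_of_tendsto {u : ℕ → ℝ}
    (h : Filter.Tendsto u Filter.atTop Filter.atTop) :
    Filter.liminf (fun i => ((u i : EReal))) Filter.atTop = ⊤ := by
  apply ereal_eq_top_of_forall_le
  intro r
  refine Filter.le_liminf_of_le (by isBoundedDefault) ?_
  filter_upwards [Filter.tendsto_atTop.1 h r] with i hi
  exact_mod_cast hi

lemma eventually_gt_of_coe_le_liminf {u : ℕ → ℝ} {r c : ℝ} (hcr : c < r)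
    (h : (r : EReal) ≤ Filter.liminf (fun i => ((u i : EReal))) Filter.atTop) :
    ∀ᶠ i in Filter.atTop, c < u i := by
  have hlt : ((c : EReal)) < Filter.liminf (fun i => ((u i : EReal))) Filter.atTop :=
    lt_of_lt_of_le (by exact_mod_cast hcr) h
  filter_upwards [Filter.eventually_lt_of_lt_liminf hlt] with i hi
  exact_mod_cast hi

lemma gpBoundary_nonneg (a : X) (p q : Boundary a) : 0 ≤ gpBoundary a p q := by
  apply le_sInf
  rintro e ⟨x, y, hx, hy, -, -, rfl⟩
  refine Filter.le_liminf_of_le (by isBoundedDefault) ?_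
  filter_upwards with i
  exact_mod_cast gp_nonneg a (x i) (y i)

lemma negPow_nonneg {K : ℝ} (hK : 0 ≤ K) (e : EReal) : 0 ≤ negPow K e := by
  unfold negPow
  split_ifs
  · exact le_rfl
  · exact le_rfl
  · exact Real.rpow_nonneg hK _

end Aux4
set_option maxHeartbeats 1000000 in
/-- a radial function between proper geodesic hyperbolic spaces
induces a well-defined map of sequential boundaries which is Hölder with
respect to visual metrics. -/
theorem stmt10 {X : Type*} [MetricSpace X] [ProperSpace X]
    {Y : Type*} [MetricSpace Y] [ProperSpace Y]
    (δ : ℝ) (hX : IsDeltaHyperbolic X δ) (hY : IsDeltaHyperbolic Y δ)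
    (hgX : IsGeodesicSpace X) (hgY : IsGeodesicSpace Y)
    (f : X → Y) (a : X) (hrad : Radial f a)
    (dX : Boundary a → Boundary a → ℝ) (KX CX : ℝ) (hdX : IsVisualMetric a dX KX CX)
    (dY : Boundary (f a) → Boundary (f a) → ℝ) (KY CY : ℝ)
    (hdY : IsVisualMetric (f a) dY KY CY) :
    (∀ x : ℕ → X, ConvSeq a x → ConvSeq (f a) (f ∘ x)) ∧
    (∀ x y : ℕ → X, ConvSeq a x → ConvSeq a y → SeqEquiv a x y →
      SeqEquiv (f a) (f ∘ x) (f ∘ y)) ∧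
    (∃ g : Boundary a → Boundary (f a), InducedBoundaryMap a f g ∧ IsHolder dX dY g) := by
  obtain ⟨lam, C, hlam, hC, hstar⟩ := gp_image_lower hX hY hgX f a hrad
  obtain ⟨part1, part2⟩ := conv_map hlam hstar
  refine ⟨part1, fun x y _ _ hxy => part2 x y hxy, ?_⟩
  obtain ⟨hKX, hCX, hdX'⟩ := hdX
  obtain ⟨hKY, hCY, hdY'⟩ := hdY
  have hKX0 : (0:ℝ) < KX := lt_trans one_pos hKX
  have hKY0 : (0:ℝ) < KY := lt_trans one_pos hKY
  have hCX0 : (0:ℝ) < CX := lt_trans one_pos hCX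
  have hCY0 : (0:ℝ) < CY := lt_trans one_pos hCY
  have hlogKX : 0 < Real.log KX := Real.log_pos hKX
  have hlogKY : 0 < Real.log KY := Real.log_pos hKY
  have hδ0 : (0:ℝ) ≤ max δ 0 := le_max_right _ _
  let G : Boundary a → Boundary (f a) := fun p =>
    Quot.lift (fun s : BSeq a => bpt (f a) (f ∘ s.1) (part1 s.1 s.2))
      (fun u v huv => Quot.sound (part2 u.1 v.1 huv)) p
  obtain ⟨α, hαdef⟩ : ∃ c : ℝ, c = lam * Real.log KY / Real.log KX := ⟨_, rfl⟩
  have hα0 : 0 < α := hαdef ▸ div_pos (mul_pos hlam hlogKY) hlogKX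
  obtain ⟨C₂, hC₂⟩ : ∃ c : ℝ, c = C + lam + max δ 0 / 2 := ⟨_, rfl⟩
  obtain ⟨L, hLdef⟩ : ∃ c : ℝ, c = CY * KY ^ C₂ * CX ^ α := ⟨_, rfl⟩
  have hL0 : 0 < L := by
    rw [hLdef]
    have := Real.rpow_pos_of_pos hKY0 C₂
    have := Real.rpow_pos_of_pos hCX0 α
    positivity
  have hdXnn : ∀ p q : Boundary a, 0 ≤ dX p q := fun p q =>
    le_trans (div_nonneg (negPow_nonneg hKX0.le _) hCX0.le) (hdX' p q).1
  have hRHS : ∀ p q : Boundary a, 0 ≤ L * Real.rpow (dX p q) α := fun p q =>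
    mul_nonneg hL0.le (Real.rpow_nonneg (hdXnn p q) α)
  refine ⟨G, fun x hx hfx => rfl, L, α, hL0, hα0, fun p q => ?_⟩
  obtain ⟨u, hu⟩ := Quot.exists_rep p
  obtain ⟨v, hv⟩ := Quot.exists_rep q
  have hTle : gpBoundary a p q ≤
      Filter.liminf (fun i => ((gp a (u.1 i) (v.1 i) : EReal))) Filter.atTop :=
    sInf_le ⟨u.1, v.1, u.2, v.2, hu, hv, rfl⟩
  by_cases hT : gpBoundary a p q = ⊤
  · -- the two boundary points coincide
    have htop : Filter.liminf (fun i => ((gp a (u.1 i) (v.1 i) : EReal))) Filter.atTop = ⊤ :=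
      top_le_iff.1 (hT ▸ hTle)
    have hdiag : Filter.Tendsto (fun i => gp a (u.1 i) (v.1 i)) Filter.atTop Filter.atTop := by
      rw [Filter.tendsto_atTop]
      intro r
      filter_upwards [eventually_gt_of_coe_le_liminf (show r < r + 1 by linarith)
        (htop ▸ le_top)] with i hi
      linarith
    have hpq : p = q := by
      rw [← hu, ← hv]
      exact Quot.sound (seqEquiv_of_diag hX u.2 v.2 hdiag)
    rw [hpq]
    have hGtop : gpBoundary (f a) (G q) (G q) = ⊤ := by
      apply sInf_eq_top.2
      rintro e ⟨x', y', hx', hy', hbx, hby, rfl⟩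
      have hqq : SeqEquiv (f a) x' y' := (bpt_eq_iff hY hx' hy').1 (hbx.trans hby.symm)
      exact liminf_coe_top_of_tendsto (hqq.comp tendsto_diag)
    have hb := (hdY' (G q) (G q)).2
    rw [hGtop] at hb
    have hzero : negPow KY ⊤ = 0 := by simp [negPow]
    rw [hzero, mul_zero] at hb
    exact le_trans hb (hRHS q q)
  · have hT0 : (0:EReal) ≤ gpBoundary a p q := gpBoundary_nonneg a p q
    have hTbot : gpBoundary a p q ≠ ⊥ := ne_bot_of_le_ne_bot (by simp) hT0
    obtain ⟨r, hrdef⟩ : ∃ c : ℝ, c = (gpBoundary a p q).toReal := ⟨_, rfl⟩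
    have hrT : ((r : EReal)) = gpBoundary a p q := hrdef ▸ EReal.coe_toReal hT hTbot
    have hTle' : ((r : EReal)) ≤
        Filter.liminf (fun i => ((gp a (u.1 i) (v.1 i) : EReal))) Filter.atTop := by
      rw [hrT]; exact hTle
    have hev : ∀ᶠ i in Filter.atTop, r - 1 < gp a (u.1 i) (v.1 i) :=
      eventually_gt_of_coe_le_liminf (by linarith) hTle'
    have hev2 : ∀ᶠ i in Filter.atTop, lam * (r - 1) - C ≤ gp (f a) (f (u.1 i)) (f (v.1 i)) := by
      filter_upwards [hev] with i hi
      have h1 := hstar (u.1 i) (v.1 i)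
      have h2 := mul_le_mul_of_nonneg_left hi.le hlam.le
      linarith
    have hGp : G p = bpt (f a) (f ∘ u.1) (part1 u.1 u.2) := by rw [← hu]
    have hGq : G q = bpt (f a) (f ∘ v.1) (part1 v.1 v.2) := by rw [← hv]
    obtain ⟨c, hcdef⟩ : ∃ c : ℝ, c = lam * (r - 1) - C - max δ 0 / 2 := ⟨_, rfl⟩
    have hS : (c : EReal) ≤ gpBoundary (f a) (G p) (G q) := by
      apply le_sInf
      rintro e ⟨x', y', hx', hy', hbx, hby, rfl⟩
      have e1 : SeqEquiv (f a) x' (f ∘ u.1) :=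
        (bpt_eq_iff hY hx' (part1 u.1 u.2)).1 (hbx.trans hGp)
      have e2 : SeqEquiv (f a) (f ∘ v.1) y' :=
        seqEquiv_symm ((bpt_eq_iff hY hy' (part1 v.1 v.2)).1 (hby.trans hGq))
      refine Filter.le_liminf_of_le (by isBoundedDefault) ?_
      obtain ⟨N₁, hN₁⟩ := Filter.eventually_atTop.1
        (Filter.tendsto_atTop.1 e1 (c + max δ 0 / 2))
      obtain ⟨N₂, hN₂⟩ := Filter.eventually_atTop.1
        (Filter.tendsto_atTop.1 e2 (c + max δ 0 / 2))
      obtain ⟨N₃, hN₃⟩ := Filter.eventually_atTop.1 hev2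
      refine Filter.eventually_atTop.2 ⟨max N₁.1 N₂.2, fun i hi => ?_⟩
      obtain ⟨J, hJ⟩ : ∃ J : ℕ, J = max (max N₁.2 N₂.1) N₃ := ⟨_, rfl⟩
      have a1 : c + max δ 0 / 2 ≤ gp (f a) (x' i) (f (u.1 J)) :=
        hN₁ (i, J) ⟨le_trans (le_max_left _ _) hi, by omega⟩
      have a2 : c + max δ 0 / 2 ≤ gp (f a) (f (v.1 J)) (y' i) :=
        hN₂ (J, i) ⟨by omega, le_trans (le_max_right _ _) hi⟩
      have a3 : c + max δ 0 / 2 ≤ gp (f a) (f (u.1 J)) (f (v.1 J)) := by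
        have := hN₃ J (by omega)
        linarith [hcdef]
      have s2 := hyp' hY (f a) (f (u.1 J)) (y' i) (f (v.1 J))
      have s1 := hyp' hY (f a) (x' i) (y' i) (f (u.1 J))
      have m2 : c + max δ 0 / 4 ≤ gp (f a) (f (u.1 J)) (y' i) := by
        have := le_min a3 a2
        linarith
      have m1 : c ≤ gp (f a) (x' i) (y' i) := by
        have hmin := le_min (le_trans (by linarith : c + max δ 0 / 4 ≤ c + max δ 0 / 2) a1) m2
        linarith
      exact_mod_cast m1
    by_cases hStop : gpBoundary (f a) (G p) (G q) = ⊤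
    · have hb := (hdY' (G p) (G q)).2
      rw [hStop] at hb
      have hzero : negPow KY ⊤ = 0 := by simp [negPow]
      rw [hzero, mul_zero] at hb
      exact le_trans hb (hRHS p q)
    · have hSbot : gpBoundary (f a) (G p) (G q) ≠ ⊥ :=
        ne_bot_of_le_ne_bot (by simp) (gpBoundary_nonneg (f a) (G p) (G q))
      obtain ⟨s, hsdef⟩ : ∃ c : ℝ, c = (gpBoundary (f a) (G p) (G q)).toReal := ⟨_, rfl⟩
      have hs : lam * r - C₂ ≤ s := by
        have h' := EReal.toReal_le_toReal hS (by simp) hStop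
        rw [EReal.toReal_coe] at h'
        rw [hsdef, hC₂]
        linarith [hcdef ▸ h']
      have hdYb : dY (G p) (G q) ≤ CY * KY ^ (-s) := by
        have hb := (hdY' (G p) (G q)).2
        rw [negPow, if_neg hStop, if_neg hSbot] at hb
        rw [hsdef]
        exact hb
      have hdXb : KX ^ (-r) / CX ≤ dX p q := by
        have hb := (hdX' p q).1
        rw [negPow, if_neg hT, if_neg hTbot] at hb
        rw [hrdef]
        exact hb
      have hXpow0 : 0 < KX ^ (-r) := Real.rpow_pos_of_pos hKX0 _
      have hlow0 : 0 ≤ KX ^ (-r) / CX := (div_pos hXpow0 hCX0).le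
      have hmono : (KX ^ (-r) / CX) ^ α ≤ (dX p q) ^ α :=
        Real.rpow_le_rpow hlow0 hdXb hα0.le
      have key : (KX ^ (-r) / CX) ^ α = KY ^ (-(lam * r)) / CX ^ α := by
        rw [Real.div_rpow (Real.rpow_nonneg hKX0.le _) hCX0.le]
        congr 1
        rw [← Real.rpow_mul hKX0.le]
        rw [Real.rpow_def_of_pos hKX0, Real.rpow_def_of_pos hKY0]
        congr 1
        rw [hαdef]
        field_simp
      have expmono : KY ^ (-s) ≤ KY ^ (C₂ - lam * r) :=
        Real.rpow_le_rpow_of_exponent_le hKY.le (by linarith)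
      have hCXα : (0:ℝ) < CX ^ α := Real.rpow_pos_of_pos hCX0 _
      have hfin : CY * KY ^ (C₂ - lam * r) = L * (KY ^ (-(lam * r)) / CX ^ α) := by
        rw [hLdef, sub_eq_add_neg, Real.rpow_add hKY0]
        field_simp
      calc dY (G p) (G q) ≤ CY * KY ^ (-s) := hdYb
        _ ≤ CY * KY ^ (C₂ - lam * r) := mul_le_mul_of_nonneg_left expmono hCY0.le
        _ = L * (KY ^ (-(lam * r)) / CX ^ α) := hfin
        _ = L * (KX ^ (-r) / CX) ^ α := by rw [key]
        _ ≤ L * (dX p q) ^ α := mul_le_mul_of_nonneg_left hmono hL0.le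

end Gromov
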